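/- The homodyne Fisher information H_η = 2η²(1+2N_B-r)² / (η²r + (1-η²)(1+2N_B))² + 4N_coh / (η²r + (1-η²)(1+2N_B)) satisfies H_η ≥ 0, and for fixed r ∈ (0,1], N_coh ≥ 0, N_B ≥ 0, the ratio H_η / [4N_S/((1-η²)(1+2N_B))] tends to 0 as η → 1⁻ whenever N_coh and r are fixed; i.e., H_η stays bounded as η → 1 while the optimal QFI diverges like (1-η²)⁻¹. -/
import Mathlib


noncomputable def Hhom (NB r Ncoh η : ℝ) : ℝ :=
  2*η^2*(1 + 2*NB - r)^2 / (η^2*r + (1-η^2)*(1+2*NB))^2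
    + 4*Ncoh / (η^2*r + (1-η^2)*(1+2*NB))

theorem homodyne_no_divergence (NB r Ncoh : ℝ)
    (hr0 : 0 < r) (hr1 : r ≤ 1) (hNcoh : 0 ≤ Ncoh) (hNB : 0 ≤ NB) :
    (∀ η ∈ Set.Ico (0:ℝ) 1, 0 ≤ Hhom NB r Ncoh η) ∧
    (∃ C : ℝ, ∀ η ∈ Set.Ico (0:ℝ) 1, Hhom NB r Ncoh η ≤ C) ∧
    Filter.Tendsto
      (fun η => Hhom NB r Ncoh η /
        (4*(Ncoh + (r + r⁻¹ - 2)/4) / ((1-η^2)*(1+2*NB))))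
      (nhdsWithin 1 (Set.Iio 1)) (nhds 0) := by
  have hden : ∀ η : ℝ, η^2 ≤ 1 → r ≤ η^2*r + (1-η^2)*(1+2*NB) := by
    intro η h
    nlinarith [sq_nonneg η]
  refine ⟨?_, ?_, ?_⟩
  · intro η hη
    have h2 : η^2 ≤ 1 := by nlinarith [hη.1, hη.2]
    have hD : 0 < η^2*r + (1-η^2)*(1+2*NB) := lt_of_lt_of_le hr0 (hden η h2)
    unfold Hhom
    apply add_nonneg
    · apply div_nonneg (by positivity) (by positivity)
    · exact div_nonneg (by positivity) hD.le
  · refine ⟨2*(1 + 2*NB - r)^2/r^2 + 4*Ncoh/r, ?_⟩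
    intro η hη
    have h2 : η^2 ≤ 1 := by nlinarith [hη.1, hη.2]
    have hD : r ≤ η^2*r + (1-η^2)*(1+2*NB) := hden η h2
    unfold Hhom
    have ht1 : 2*η^2*(1 + 2*NB - r)^2 / (η^2*r + (1-η^2)*(1+2*NB))^2
        ≤ 2*(1 + 2*NB - r)^2/r^2 :=
      div_le_div₀ (by positivity) (by nlinarith [sq_nonneg (1+2*NB-r)])
        (by positivity) (by nlinarith)
    have ht2 : 4*Ncoh / (η^2*r + (1-η^2)*(1+2*NB)) ≤ 4*Ncoh/r :=
      div_le_div₀ (by positivity) le_rfl hr0 hD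
    linarith
  · have key : (fun η : ℝ => Hhom NB r Ncoh η /
        (4*(Ncoh + (r + r⁻¹ - 2)/4) / ((1-η^2)*(1+2*NB))))
        = (fun η : ℝ => Hhom NB r Ncoh η * ((1-η^2)*(1+2*NB)) /
          (4*(Ncoh + (r + r⁻¹ - 2)/4))) := by
      funext η
      exact div_div_eq_mul_div _ _ _
    rw [key]
    have hne : ((1:ℝ)^2*r + (1-1^2)*(1+2*NB)) ≠ 0 := by
      have : (1:ℝ)^2*r + (1-1^2)*(1+2*NB) = r := by ring
      rw [this]; exact hr0.ne'
    have hc : ContinuousAt (fun η : ℝ => Hhom NB r Ncoh η * ((1-η^2)*(1+2*NB)) /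
        (4*(Ncoh + (r + r⁻¹ - 2)/4))) 1 := by
      apply ContinuousAt.div_const
      apply ContinuousAt.mul ?_ (by fun_prop)
      unfold Hhom
      apply ContinuousAt.add
      · exact ContinuousAt.div (by fun_prop) (by fun_prop) (pow_ne_zero 2 hne)
      · exact ContinuousAt.div (by fun_prop) (by fun_prop) hne
    have hval : Hhom NB r Ncoh 1 * ((1-(1:ℝ)^2)*(1+2*NB)) /
        (4*(Ncoh + (r + r⁻¹ - 2)/4)) = 0 := by
      norm_num
    have := hc.tendsto.mono_left (nhdsWithin_le_nhds (s := Set.Iio 1))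
    rw [hval] at this
    exact this
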